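/- Let D be a fundamental discriminant and 2-adic integers n, r, m, f with v(n) = v(r) − n_2 < v(m) − 2n_2 and r² − 4mn = D f², where v is the 2-adic valuation and n_2 ≥ 1. If m/(n·2^{2n_2 − 2}) ∈ 8ℤ_2 and (−r/(n·2^{n_2}))² − D f²/(n² 2^{2n_2}) = m/(n·2^{2n_2 − 2}), then v(D) is even, hence v(D) ∈ {0, 2}. -/

import Mathlib

private lemma pv_mul {p : ℕ} [hp : Fact p.Prime] {x y : ℤ_[p]} (hx : x ≠ 0) (hy : y ≠ 0) :
    (x * y).valuation = x.valuation + y.valuation := by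
  have hc : ((x * y : ℤ_[p]) : ℚ_[p]) = (x : ℚ_[p]) * (y : ℚ_[p]) := by push_cast; ring
  simp only [PadicInt.valuation, hc]
  rw [Padic.valuation_mul (PadicInt.coe_ne_zero.2 hx) (PadicInt.coe_ne_zero.2 hy)]
  exact Int.toNat_add (PadicInt.valuation_coe_nonneg (x := x)) (PadicInt.valuation_coe_nonneg (x := y))

private lemma pv_eq_of_norm_eq {p : ℕ} [hp : Fact p.Prime] {x y : ℤ_[p]} (hx : x ≠ 0) (hy : y ≠ 0)
    (h : ‖x‖ = ‖y‖) : x.valuation = y.valuation := by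
  rw [PadicInt.norm_eq_zpow_neg_valuation hx, PadicInt.norm_eq_zpow_neg_valuation hy] at h
  have hp1 : (1 : ℝ) < p := by exact_mod_cast hp.1.one_lt
  have := (zpow_right_strictMono₀ hp1).injective h
  linarith

private lemma pv_sub {p : ℕ} [hp : Fact p.Prime] {x y : ℤ_[p]} (hx : x ≠ 0) (hy : y ≠ 0)
    (h : x.valuation < y.valuation) : x - y ≠ 0 ∧ (x - y).valuation = x.valuation := by
  have hp1 : (1 : ℝ) < p := by exact_mod_cast hp.1.one_lt
  have hne : x ≠ y := by rintro rfl; exact lt_irrefl _ h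
  have hxy : x - y ≠ 0 := sub_ne_zero.mpr hne
  have hnorm : ‖y‖ < ‖x‖ := by
    rw [PadicInt.norm_eq_zpow_neg_valuation hx, PadicInt.norm_eq_zpow_neg_valuation hy]
    exact zpow_lt_zpow_right₀ hp1 (by omega)
  refine ⟨hxy, pv_eq_of_norm_eq hxy hx ?_⟩
  rw [sub_eq_add_neg, PadicInt.norm_add_eq_max_of_ne (by rw [norm_neg]; exact hnorm.ne'),
    norm_neg]
  exact max_eq_left hnorm.le

private lemma pv_pow2 (k : ℕ) : ((2 : ℤ_[2]) ^ k).valuation = k := by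
  have h2 : ((2 : ℕ) : ℤ_[2]) = (2 : ℤ_[2]) := by norm_num
  have := PadicInt.valuation_p_pow_mul (p := 2) k 1 one_ne_zero
  rw [h2, mul_one, PadicInt.valuation_one, add_zero] at this
  exact this

def IsFundamentalDiscriminant (D : ℤ) : Prop :=
  (Squarefree D ∧ D % 4 = 1) ∨
    (∃ d : ℤ, D = 4 * d ∧ Squarefree d ∧ (d % 4 = 2 ∨ d % 4 = 3))

theorem fundamental_discriminant_even_valuation
    (D : ℤ) (hD : IsFundamentalDiscriminant D)
    (n r m f : ℤ_[2]) (n2 : ℕ) (hn2 : 1 ≤ n2)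
    (hn : n ≠ 0) (hr : r ≠ 0) (hm : m ≠ 0)
    (hv1 : n.valuation = r.valuation - n2)
    (hv2 : r.valuation - n2 < m.valuation - 2 * n2)
    (heq : r ^ 2 - 4 * m * n = (D : ℤ_[2]) * f ^ 2)
    (hdiv : ∃ t : ℤ_[2], m = n * (2 : ℤ_[2]) ^ (2 * n2 - 2) * (8 * t)) :
    Even (padicValInt 2 D) ∧ (padicValInt 2 D = 0 ∨ padicValInt 2 D = 2) := by
  obtain ⟨t, ht⟩ := hdiv
  have hD0 : D ≠ 0 := by
    rcases hD with ⟨hsq, _⟩ | ⟨d, rfl, hsq, _⟩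
    · exact hsq.ne_zero
    · have := hsq.ne_zero; intro h; omega
  have ht0 : t ≠ 0 := by
    rintro rfl; simp at ht; exact hm ht
  -- rewrite m as 2^(2*n2+1) * (n*t)
  have hm' : m = (2 : ℤ_[2]) ^ (2 * n2 + 1) * (n * t) := by
    rw [ht]
    have : (8 : ℤ_[2]) = 2 ^ 3 := by norm_num
    rw [this, show 2 * n2 + 1 = (2 * n2 - 2) + 3 by omega, pow_add]
    ring
  have hnt : n * t ≠ 0 := mul_ne_zero hn ht0
  have hvm : m.valuation = (2 * n2 + 1 : ℕ) + (n.valuation + t.valuation) := by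
    rw [hm']
    have h2 : ((2 : ℕ) : ℤ_[2]) = (2 : ℤ_[2]) := by norm_num
    rw [← h2, PadicInt.valuation_p_pow_mul _ _ hnt, pv_mul hn ht0]
  have hvt : 0 ≤ t.valuation := Nat.zero_le _
  -- valuation of r^2
  have hr2 : r ^ 2 ≠ 0 := pow_ne_zero 2 hr
  have hvr2 : (r ^ 2).valuation = 2 * r.valuation := by
    rw [sq, pv_mul hr hr]; ring
  -- valuation of 4*m*n
  have h4mn : (4 : ℤ_[2]) * m * n ≠ 0 := by
    refine mul_ne_zero (mul_ne_zero ?_ hm) hn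
    norm_num
  have hv4 : ((4 : ℤ_[2])).valuation = 2 := by
    have : (4 : ℤ_[2]) = 2 ^ 2 := by norm_num
    rw [this, pv_pow2]
  have hv4mn : ((4 : ℤ_[2]) * m * n).valuation = 2 + m.valuation + n.valuation := by
    rw [pv_mul (mul_ne_zero (by norm_num) hm) hn, pv_mul (by norm_num : (4:ℤ_[2]) ≠ 0) hm, hv4]
  -- key inequality
  have hkey : (r ^ 2).valuation < ((4 : ℤ_[2]) * m * n).valuation := by
    rw [hvr2, hv4mn, hvm]
    push_cast
    omega
  obtain ⟨hsub0, hsub⟩ := pv_sub hr2 h4mn hkey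
  -- f ≠ 0
  have hDf : (D : ℤ_[2]) * f ^ 2 ≠ 0 := heq ▸ hsub0
  have hf0 : f ≠ 0 := by
    intro h; rw [h] at hDf; simp at hDf
  have hDz : (D : ℤ_[2]) ≠ 0 := fun h => hDf (by rw [h, zero_mul])
  -- valuation of D
  have hvD : (D : ℤ_[2]).valuation = (padicValInt 2 D : ℤ) := by
    have : (((D : ℤ_[2]) : ℚ_[2])) = (D : ℚ_[2]) := by push_cast; ring
    rw [PadicInt.valuation, this, Padic.valuation_intCast, Int.toNat_natCast]
  have hvf2 : (f ^ 2).valuation = 2 * f.valuation := by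
    rw [sq, pv_mul hf0 hf0]; ring
  have hmain : (padicValInt 2 D : ℤ) + 2 * f.valuation = 2 * r.valuation := by
    have h1 : ((D : ℤ_[2]) * f ^ 2).valuation = (r ^ 2).valuation := by rw [← heq, hsub]
    rw [pv_mul hDz (pow_ne_zero 2 hf0)] at h1
    zify at h1
    rw [hvD, hvf2, hvr2] at h1
    push_cast at h1
    exact h1
  have heven : Even (padicValInt 2 D) := by
    have : (padicValInt 2 D : ℤ) = 2 * (r.valuation - f.valuation) := by linarith
    have : Even ((padicValInt 2 D : ℤ)) := ⟨r.valuation - f.valuation, by linarith⟩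
    exact_mod_cast this
  refine ⟨heven, ?_⟩
  rcases hD with ⟨hsq, h4⟩ | ⟨d, rfl, hsq, hcase⟩
  · left
    exact padicValInt.eq_zero_of_not_dvd (by omega)
  · have hd0 : d ≠ 0 := hsq.ne_zero
    rcases hcase with h2 | h3
    · -- d ≡ 2 mod 4 : valuation 3, contradicts parity
      exfalso
      set e := d / 2 with he
      have hde : d = 2 * e ∧ ¬ (2 ∣ e) := by constructor <;> omega
      have he0 : e ≠ 0 := by intro h; rw [h] at hde; omega
      have : (4 : ℤ) * d = 2 ^ 3 * e := by rw [hde.1]; ring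
      rw [this, padicValInt.mul (by norm_num) he0,
        padicValInt.eq_zero_of_not_dvd (z := e) (by exact_mod_cast hde.2)] at heven
      have h8 : padicValInt 2 ((2 : ℤ) ^ 3) = 3 := by
        have : ((2 : ℤ) ^ 3).natAbs = 2 ^ 3 := by norm_num
        rw [padicValInt, this, padicValNat.prime_pow]
      rw [h8] at heven
      exact (Nat.not_even_iff.mpr rfl) heven
    · -- d ≡ 3 mod 4 : d odd, valuation = 2
      right
      have hodd : ¬ ((2 : ℤ) ∣ d) := by omega
      rw [padicValInt.mul (by norm_num) hd0, padicValInt.eq_zero_of_not_dvd hodd]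
      have h4v : padicValInt 2 (4 : ℤ) = 2 := by
        have : (4 : ℤ) = 2 ^ 2 := by norm_num
        have h4n : ((2 : ℤ) ^ 2).natAbs = 2 ^ 2 := by norm_num
        rw [this, padicValInt, h4n, padicValNat.prime_pow]
      rw [h4v]
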